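/- Let Γ ⊂ ℂⁿ be a compact set homeomorphic to a circle such that polynomials are dense in C(Γ, ℂ). Then there exist polynomials P₊ and P₋, each nonvanishing on Γ, such that the winding number of P₊ along Γ is +1 and the winding number of P₋ along Γ is −1. -/

import Mathlib

open Complex

/-- A continuous loop `γ : [0,1] → ℂ \ {0}` has winding number `n` around `0`
if a continuous argument function along it changes by `2πn`. -/
def HasWindingNumber (γ : ℝ → ℂ) (n : ℤ) : Prop :=
  ∃ θ : ℝ → ℝ, ContinuousOn θ (Set.Icc 0 1) ∧
    (∀ t ∈ Set.Icc (0:ℝ) 1, γ t = (‖γ t‖ : ℂ) * Complex.exp (θ t * I)) ∧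
    θ 1 - θ 0 = 2 * Real.pi * n

lemma winding_aux (n : ℤ) (g : ℝ → ℂ) (hg : ContinuousOn g (Set.Icc 0 1))
    (hloop : g 0 = g 1)
    (happ : ∀ t ∈ Set.Icc (0:ℝ) 1,
      ‖g t - Complex.exp ((2 * Real.pi * n * t : ℝ) * I)‖ < 1) :
    (∀ t ∈ Set.Icc (0:ℝ) 1, g t ≠ 0) ∧ HasWindingNumber g n := by
  set c : ℝ := 2 * Real.pi * n with hc
  set q : ℝ → ℂ := fun t => g t * Complex.exp ((-(c * t) : ℝ) * I) with hq
  have hee : ∀ t : ℝ, Complex.exp ((c * t : ℝ) * I) * Complex.exp ((-(c * t) : ℝ) * I) = 1 := by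
    intro t
    rw [← Complex.exp_add]
    push_cast
    ring_nf
    exact Complex.exp_zero
  have habs : ∀ x : ℝ, ‖Complex.exp ((x : ℂ) * I)‖ = 1 := fun x =>
    Complex.norm_exp_ofReal_mul_I _
  have hq1 : ∀ t ∈ Set.Icc (0:ℝ) 1, ‖q t - 1‖ < 1 := by
    intro t ht
    have heq : q t - 1 = (g t - Complex.exp ((c * t : ℝ) * I)) *
        Complex.exp ((-(c * t) : ℝ) * I) := by
      rw [hq]; simp only
      rw [sub_mul, hee t]
    rw [heq, norm_mul, habs, mul_one]
    exact happ t ht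
  have hre : ∀ t ∈ Set.Icc (0:ℝ) 1, 0 < (q t).re := by
    intro t ht
    have h2 : |(q t - 1).re| < 1 := lt_of_le_of_lt (Complex.abs_re_le_norm _) (hq1 t ht)
    have h3 : (q t - 1).re = (q t).re - 1 := by simp
    rw [h3] at h2
    linarith [(abs_lt.mp h2).1]
  have hqne : ∀ t ∈ Set.Icc (0:ℝ) 1, q t ≠ 0 := by
    intro t ht h0
    have := hre t ht; rw [h0] at this; simp at this
  have hgq : ∀ t : ℝ, g t = q t * Complex.exp ((c * t : ℝ) * I) := by
    intro t
    rw [hq]; simp only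
    rw [mul_assoc, mul_comm (Complex.exp _), hee t, mul_one]
  have hgne : ∀ t ∈ Set.Icc (0:ℝ) 1, g t ≠ 0 := by
    intro t ht h0
    apply hqne t ht
    have := hgq t
    rw [h0] at this
    exact (mul_eq_zero.mp this.symm).resolve_right (Complex.exp_ne_zero _)
  refine ⟨hgne, ?_⟩
  refine ⟨fun t => c * t + (q t).arg, ?_, ?_, ?_⟩
  · have hqc : ContinuousOn q (Set.Icc 0 1) := by
      apply hg.mul
      apply Continuous.continuousOn
      exact Complex.continuous_exp.comp (by fun_prop)
    apply ContinuousOn.add (by fun_prop)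
    intro t ht
    exact (Complex.continuousAt_arg (Or.inl (hre t ht))).comp_continuousWithinAt (hqc t ht)
  · intro t ht
    have h1 : q t = (‖q t‖ : ℂ) * Complex.exp ((q t).arg * I) :=
      (Complex.norm_mul_exp_arg_mul_I (q t)).symm
    have h2 : ‖g t‖ = ‖q t‖ := by
      rw [hgq t, norm_mul, habs, mul_one]
    rw [h2]
    conv_lhs => rw [hgq t, h1]
    rw [mul_assoc, ← Complex.exp_add]
    push_cast
    ring_nf
  · have hq0 : q 0 = g 0 := by
      rw [hq]; simp
    have hq1' : q 1 = g 1 := by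
      rw [hq]; simp only [mul_one]
      have h1 : Complex.exp ((-c : ℝ) * I) = 1 := by
        have h2 := Complex.exp_int_mul_two_pi_mul_I (-n)
        rw [← h2]
        push_cast [hc]
        ring_nf
      rw [h1, mul_one]
    have heq : q 1 = q 0 := by rw [hq0, hq1', hloop]
    show c * 1 + (q 1).arg - (c * 0 + (q 0).arg) = 2 * Real.pi * n
    rw [heq, hc]
    ring

set_option maxHeartbeats 1000000 in
lemma exists_poly_winding {N : ℕ} (n : ℤ) (γ : ℝ → (Fin N → ℂ))
    (hγ : ContinuousOn γ (Set.Icc 0 1)) (hloop : γ 0 = γ 1)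
    (hinj : Set.InjOn γ (Set.Ico 0 1))
    (hdense : ∀ f : (Fin N → ℂ) → ℂ, ContinuousOn f (γ '' Set.Icc 0 1) → ∀ ε : ℝ, 0 < ε →
      ∃ P : MvPolynomial (Fin N) ℂ, ∀ z ∈ γ '' Set.Icc 0 1,
        ‖f z - MvPolynomial.eval z P‖ < ε) :
    ∃ P : MvPolynomial (Fin N) ℂ,
      (∀ z ∈ γ '' Set.Icc 0 1, MvPolynomial.eval z P ≠ 0) ∧
      HasWindingNumber (fun t => MvPolynomial.eval (γ t) P) n := by
  set e : ℝ → ℂ := fun t => Complex.exp ((2 * Real.pi * n * t : ℝ) * I) with he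
  have hec : Continuous e := by
    rw [he]
    exact Complex.continuous_exp.comp
      ((Complex.continuous_ofReal.comp (continuous_const.mul continuous_id)).mul continuous_const)
  have he10 : e 1 = e 0 := by
    rw [he]; simp only [mul_one, mul_zero]
    rw [Complex.ofReal_zero, zero_mul, Complex.exp_zero]
    have h2 := Complex.exp_int_mul_two_pi_mul_I n
    rw [← h2]
    push_cast
    ring_nf
  have key : ∀ s ∈ Set.Icc (0:ℝ) 1, ∀ t ∈ Set.Icc (0:ℝ) 1, γ s = γ t → e s = e t := by
    intro s hs t ht hst
    rcases eq_or_lt_of_le hs.2 with hs1 | hs1 <;> rcases eq_or_lt_of_le ht.2 with ht1 | ht1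
    · rw [hs1, ht1]
    · have : s = 1 := hs1
      rw [this, ← hloop] at hst
      have ht0 : t = 0 := hinj ⟨ht.1, ht1⟩ ⟨le_refl 0, one_pos⟩ hst.symm
      rw [this, ht0, he10]
    · have : t = 1 := ht1
      rw [this, ← hloop] at hst
      have hs0 : s = 0 := hinj ⟨hs.1, hs1⟩ ⟨le_refl 0, one_pos⟩ hst
      rw [this, hs0, he10]
    · rw [hinj ⟨hs.1, hs1⟩ ⟨ht.1, ht1⟩ hst]
  choose! τ hτ1 hτ2 using fun z (h : z ∈ γ '' Set.Icc 0 1) => h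
  set F : (Fin N → ℂ) → ℂ := fun z => e (τ z) with hF
  have hFγ : ∀ t ∈ Set.Icc (0:ℝ) 1, F (γ t) = e t := by
    intro t ht
    have hm : γ t ∈ γ '' Set.Icc 0 1 := Set.mem_image_of_mem γ ht
    exact key _ (hτ1 _ hm) t ht (hτ2 _ hm)
  have hFc : ContinuousOn F (γ '' Set.Icc 0 1) := by
    rw [continuousOn_iff_continuous_restrict]
    have hcontγ : Continuous ((Set.Icc (0:ℝ) 1).restrict γ) :=
      continuousOn_iff_continuous_restrict.mp hγ
    set g : Set.Icc (0:ℝ) 1 → ↥(γ '' Set.Icc 0 1) :=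
      fun t => ⟨γ t, Set.mem_image_of_mem γ t.2⟩ with hg
    have hgc : Continuous g := hcontγ.subtype_mk _
    have hgs : Function.Surjective g := by
      rintro ⟨z, hz⟩
      obtain ⟨x, hx, rfl⟩ := hz
      exact ⟨⟨x, hx⟩, rfl⟩
    have hquot : Topology.IsQuotientMap g := hgc.isClosedMap.isQuotientMap hgc hgs
    rw [hquot.continuous_iff]
    have : ((γ '' Set.Icc 0 1).restrict F) ∘ g = fun t : Set.Icc (0:ℝ) 1 => e t := by
      funext t
      exact hFγ t t.2
    rw [show (γ '' Set.Icc 0 1).domRestrict F ∘ g = fun t : Set.Icc (0:ℝ) 1 => e t from this]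
    exact hec.comp continuous_subtype_val
  obtain ⟨P, hP⟩ := hdense F hFc 1 one_pos
  have happ : ∀ t ∈ Set.Icc (0:ℝ) 1,
      ‖MvPolynomial.eval (γ t) P - e t‖ < 1 := by
    intro t ht
    have h1 := hP (γ t) (Set.mem_image_of_mem γ ht)
    rw [hFγ t ht] at h1
    rwa [norm_sub_rev]
  have hcg : ContinuousOn (fun t => MvPolynomial.eval (γ t) P) (Set.Icc 0 1) :=
    (MvPolynomial.continuous_eval (p := P)).comp_continuousOn hγ
  have hl : MvPolynomial.eval (γ 0) P = MvPolynomial.eval (γ 1) P := by rw [hloop]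
  obtain ⟨hne, hw⟩ := winding_aux n _ hcg hl happ
  refine ⟨P, ?_, hw⟩
  rintro z ⟨t, ht, rfl⟩
  exact hne t ht

/-- If `Γ ⊂ ℂⁿ` is a simple closed curve on which polynomials are dense in the
continuous functions, then there are polynomials `P₊`, `P₋` nonvanishing on `Γ`
with winding numbers `+1` and `-1` along `Γ`. -/
theorem exists_polynomials_winding_pm_one
    {N : ℕ} (γ : ℝ → (Fin N → ℂ))
    (hγ : ContinuousOn γ (Set.Icc 0 1))
    (hloop : γ 0 = γ 1)
    (hinj : Set.InjOn γ (Set.Ico 0 1))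
    (Γ : Set (Fin N → ℂ)) (hΓ : Γ = γ '' Set.Icc 0 1)
    (hdense : ∀ f : (Fin N → ℂ) → ℂ, ContinuousOn f Γ → ∀ ε : ℝ, 0 < ε →
      ∃ P : MvPolynomial (Fin N) ℂ, ∀ z ∈ Γ, ‖f z - MvPolynomial.eval z P‖ < ε) :
    ∃ Pp Pm : MvPolynomial (Fin N) ℂ,
      (∀ z ∈ Γ, MvPolynomial.eval z Pp ≠ 0) ∧
      (∀ z ∈ Γ, MvPolynomial.eval z Pm ≠ 0) ∧
      HasWindingNumber (fun t => MvPolynomial.eval (γ t) Pp) 1 ∧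
      HasWindingNumber (fun t => MvPolynomial.eval (γ t) Pm) (-1) := by
  subst hΓ
  obtain ⟨Pp, hPp, hwp⟩ := exists_poly_winding 1 γ hγ hloop hinj hdense
  obtain ⟨Pm, hPm, hwm⟩ := exists_poly_winding (-1) γ hγ hloop hinj hdense
  exact ⟨Pp, Pm, hPp, hPm, hwp, hwm⟩
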